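/- Let f : ℝ^d → ℝ be continuously differentiable with partial derivatives f_(1),…,f_(d). Then f preserves the unordered weak majorization order ≼ (where u ≼ v iff all initial partial sums of u are dominated by those of v) if and only if for every z ∈ ℝ^d, f_(1)(z) ≥ f_(2)(z) ≥ … ≥ f_(d)(z) ≥ 0. -/

import Mathlib

open Finset

section Aux

lemma abel_nat (a w : ℕ → ℝ) (hmono : Antitone a) (hpos : ∀ i, 0 ≤ a i)
    (hS : ∀ m, 0 ≤ ∑ k ∈ range m, w k) (n : ℕ) : 0 ≤ ∑ i ∈ range n, a i * w i := by
  rcases n with _ | n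
  · simp
  have h := Finset.sum_range_by_parts a w (n + 1)
  simp only [smul_eq_mul, Nat.add_sub_cancel] at h
  rw [h]
  have hB : ∑ i ∈ range n, (a (i + 1) - a i) * ∑ j ∈ range (i + 1), w j ≤ 0 :=
    Finset.sum_nonpos fun i _ =>
      mul_nonpos_of_nonpos_of_nonneg (by linarith [hmono (Nat.le_succ i)]) (hS (i + 1))
  have hA : 0 ≤ a n * ∑ i ∈ range (n + 1), w i :=
    mul_nonneg (hpos n) (hS (n + 1))
  linarith

lemma fin_sum_eq {d : ℕ} (w : Fin d → ℝ) (i : Fin d) :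
    ∑ k ∈ Finset.Iic i, w k
      = ∑ m ∈ range (i.val + 1), (fun m => if h : m < d then w ⟨m, h⟩ else 0) m := by
  have hr : range (i.val + 1) = Finset.Iic i.val := by ext m; simp [Nat.lt_succ_iff]
  rw [hr, ← Fin.map_valEmbedding_Iic, Finset.sum_map]
  refine Finset.sum_congr rfl fun k _ => ?_
  simp [Fin.valEmbedding_apply, k.isLt]

lemma abel_fin {d : ℕ} (a w : Fin d → ℝ)
    (hmono : ∀ i j : Fin d, i ≤ j → a j ≤ a i) (hpos : ∀ i, 0 ≤ a i)
    (hS : ∀ i, 0 ≤ ∑ k ∈ Finset.Iic i, w k) : 0 ≤ ∑ i, a i * w i := by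
  set a' : ℕ → ℝ := fun m => if h : m < d then a ⟨m, h⟩ else 0 with ha'
  set w' : ℕ → ℝ := fun m => if h : m < d then w ⟨m, h⟩ else 0 with hw'
  have hpos' : ∀ m, 0 ≤ a' m := by
    intro m; dsimp [a']; split_ifs with h
    · exact hpos _
    · exact le_rfl
  have hmono' : Antitone a' := by
    intro m n hmn; dsimp [a']; split_ifs with h1 h2 h2
    · exact hmono _ _ hmn
    · exact absurd (lt_of_le_of_lt hmn h1) h2
    · exact hpos _
    · exact le_rfl
  have key : ∀ m, m ≤ d → 0 ≤ ∑ k ∈ range m, w' k := by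
    intro m hm
    rcases Nat.eq_zero_or_pos m with rfl | hm0
    · simp
    have hlt : m - 1 < d := lt_of_lt_of_le (Nat.sub_lt hm0 one_pos) hm
    have h1 : (⟨m - 1, hlt⟩ : Fin d).val + 1 = m := Nat.succ_pred_eq_of_pos hm0
    calc (0:ℝ) ≤ ∑ k ∈ Finset.Iic (⟨m - 1, hlt⟩ : Fin d), w k := hS _
      _ = ∑ k ∈ range m, w' k := by rw [fin_sum_eq w ⟨m - 1, hlt⟩, h1]
  have hS' : ∀ m, 0 ≤ ∑ k ∈ range m, w' k := by
    intro m
    rcases le_or_gt m d with h | h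
    · exact key m h
    · have heq : ∑ k ∈ range m, w' k = ∑ k ∈ range d, w' k := by
        refine (Finset.sum_subset (Finset.range_subset_range.2 h.le) fun x _ hx => ?_).symm
        simp only [Finset.mem_range, not_lt] at hx
        simp [hw', Nat.not_lt.2 hx]
      rw [heq]; exact key d le_rfl
  have h0 := abel_nat a' w' hmono' hpos' hS' d
  calc (0:ℝ) ≤ ∑ i ∈ range d, a' i * w' i := h0
    _ = ∑ i : Fin d, a i * w i := by
      rw [← Fin.sum_univ_eq_sum_range (fun m => a' m * w' m) d]
      exact Finset.sum_congr rfl fun k _ => by simp [ha', hw', k.isLt]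

lemma clm_apply_eq_sum {d : ℕ} (D : EuclideanSpace ℝ (Fin d) →L[ℝ] ℝ)
    (w : EuclideanSpace ℝ (Fin d)) :
    D w = ∑ i, D (EuclideanSpace.single i 1) * w i := by
  have hw : w = ∑ i, w i • EuclideanSpace.single i (1:ℝ) := by
    ext j
    rw [WithLp.ofLp_sum, Finset.sum_apply]
    simp [EuclideanSpace.single_apply]
  conv_lhs => rw [hw]
  rw [map_sum]
  simp [smul_eq_mul, mul_comm]

lemma hasDerivAt_line {d : ℕ} {f : EuclideanSpace ℝ (Fin d) → ℝ} (hf : ContDiff ℝ 1 f)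
    (z w : EuclideanSpace ℝ (Fin d)) (t : ℝ) :
    HasDerivAt (fun s : ℝ => f (z + s • w)) (fderiv ℝ f (z + t • w) w) t := by
  have h1 : HasDerivAt (fun s : ℝ => z + s • w) w t := by
    simpa using ((hasDerivAt_id t).smul_const w).const_add z
  exact ((hf.differentiable one_ne_zero _).hasFDerivAt).comp_hasDerivAt t h1

end Aux

/-- The unordered weak majorization relation on `ℝ^d`. -/
def weakMajorizes {d : ℕ} (u v : EuclideanSpace ℝ (Fin d)) : Prop :=
  ∀ i : Fin d, ∑ k ∈ Finset.Iic i, u k ≤ ∑ k ∈ Finset.Iic i, v k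

lemma deriv_nonneg_of_op {d : ℕ} {f : EuclideanSpace ℝ (Fin d) → ℝ} (hf : ContDiff ℝ 1 f)
    (H : ∀ u v : EuclideanSpace ℝ (Fin d), weakMajorizes u v → f u ≤ f v)
    (z w : EuclideanSpace ℝ (Fin d)) (hw : ∀ i, 0 ≤ ∑ k ∈ Finset.Iic i, w k) :
    0 ≤ fderiv ℝ f z w := by
  have hmaj : ∀ t : ℝ, 0 ≤ t → weakMajorizes z (z + t • w) := by
    intro t ht i
    have h1 : ∑ k ∈ Finset.Iic i, (z + t • w) k
        = ∑ k ∈ Finset.Iic i, z k + t * ∑ k ∈ Finset.Iic i, w k := by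
      simp [Finset.sum_add_distrib, Finset.mul_sum]
    rw [h1]
    nlinarith [hw i]
  set g : ℝ → ℝ := fun t => f (z + t • w) with hg
  have hgd : HasDerivAt g (fderiv ℝ f z w) 0 := by
    have := hasDerivAt_line hf z w 0
    simpa using this
  have hgw : HasDerivWithinAt g (fderiv ℝ f z w) (Set.Ioi 0) 0 := hgd.hasDerivWithinAt
  rw [hasDerivWithinAt_iff_tendsto_slope] at hgw
  have hset : Set.Ioi (0:ℝ) \ {0} = Set.Ioi 0 :=
    Set.diff_singleton_eq_self (by simp)
  rw [hset] at hgw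
  refine ge_of_tendsto hgw ?_
  filter_upwards [self_mem_nhdsWithin] with t ht
  have ht' : (0:ℝ) < t := ht
  have hle : g 0 ≤ g t := by
    have h2 := H z (z + t • w) (hmaj t ht'.le)
    simpa [hg] using h2
  rw [slope_def_field]
  exact div_nonneg (by linarith) (by linarith)

/-- A continuously differentiable `f : ℝ^d → ℝ` preserves the unordered weak majorization
order iff its partial derivatives satisfy `f_(1)(z) ≥ f_(2)(z) ≥ … ≥ f_(d)(z) ≥ 0` at
every point `z`. -/
theorem orderPreserving_iff_partialDerivs {d : ℕ}
    (f : EuclideanSpace ℝ (Fin d) → ℝ) (hf : ContDiff ℝ 1 f) :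
    (∀ u v : EuclideanSpace ℝ (Fin d), weakMajorizes u v → f u ≤ f v) ↔
      (∀ z : EuclideanSpace ℝ (Fin d),
        (∀ i j : Fin d, i ≤ j →
          fderiv ℝ f z (EuclideanSpace.single j 1) ≤ fderiv ℝ f z (EuclideanSpace.single i 1)) ∧
        ∀ i : Fin d, 0 ≤ fderiv ℝ f z (EuclideanSpace.single i 1)) := by
  constructor
  · intro H z
    constructor
    · intro i j hij
      set w₀ : EuclideanSpace ℝ (Fin d) :=
        EuclideanSpace.single i (1:ℝ) - EuclideanSpace.single j (1:ℝ) with hw₀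
      have h := deriv_nonneg_of_op hf H z w₀ ?_
      · have h2 : fderiv ℝ f z w₀
            = fderiv ℝ f z (EuclideanSpace.single i 1)
              - fderiv ℝ f z (EuclideanSpace.single j 1) := map_sub _ _ _
        rw [h2] at h
        linarith
      · intro m
        have : ∀ (l : Fin d), ∑ k ∈ Finset.Iic m, EuclideanSpace.single l (1:ℝ) k
            = if l ≤ m then 1 else 0 := by
          intro l
          simp [EuclideanSpace.single_apply, Finset.sum_ite_eq']
        have hsub : ∑ k ∈ Finset.Iic m, w₀ k
            = (if i ≤ m then (1:ℝ) else 0) - (if j ≤ m then 1 else 0) := by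
          rw [← this i, ← this j, ← Finset.sum_sub_distrib]
          rfl
        rw [hsub]
        split_ifs with h1 h2 h2 <;> try norm_num
        exact absurd (le_trans hij h2) h1
    · intro i
      refine deriv_nonneg_of_op hf H z (EuclideanSpace.single i 1) fun m => ?_
      simp [EuclideanSpace.single_apply, Finset.sum_ite_eq']
      split_ifs <;> norm_num
  · intro hd u v huv
    set g : ℝ → ℝ := fun t => f (u + t • (v - u)) with hg
    have hgd : ∀ t, HasDerivAt g (fderiv ℝ f (u + t • (v - u)) (v - u)) t :=
      fun t => hasDerivAt_line hf u (v - u) t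
    have hdiff : Differentiable ℝ g := fun t => (hgd t).differentiableAt
    have hderiv : ∀ t, 0 ≤ deriv g t := by
      intro t
      rw [(hgd t).deriv, clm_apply_eq_sum]
      refine abel_fin _ _ (fun i j hij => (hd _).1 i j hij) (fun i => (hd _).2 i)
        fun i => ?_
      have : ∑ k ∈ Finset.Iic i, (v - u) k
          = ∑ k ∈ Finset.Iic i, v k - ∑ k ∈ Finset.Iic i, u k := by
        rw [← Finset.sum_sub_distrib]; rfl
      rw [this]
      linarith [huv i]
    have hmono : Monotone g := monotone_of_deriv_nonneg hdiff hderiv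
    have := hmono (show (0:ℝ) ≤ 1 by norm_num)
    simpa [hg, add_sub_cancel] using this
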